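/- Let g(x) with g(0)=1 satisfy g(x) = 1 + x·g(x)·(b_0 + b_r·(x²g(x))^r) for constants b_0, b_r and integer r ≥ 1. Then g(x)^m = Σ_{n≥0} (m/(m+rn))·C(m+rn+n-1, n)·b_rⁿ·x^{n(2r+1)}/(1-b_0 x)^{m+n(r+1)}. -/

import Mathlib

open PowerSeries

namespace Stmt12


noncomputable def c (r m n : ℕ) : ℚ :=
  if m = 0 then (if n = 0 then 1 else 0)
  else m * ((m - 1 + (r+1) * n).factorial : ℚ) / (n.factorial * (m + r * n).factorial)

lemma c_succ (r a n : ℕ) : c r (a+1) n =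
    (a+1) * ((a + (r+1) * n).factorial : ℚ) / (n.factorial * (a + 1 + r * n).factorial) := by
  simp [c]

lemma c_zero_succ (r n : ℕ) : c r 0 (n+1) = 0 := by simp [c]

lemma fQ : ∀ k : ℕ, ((k.factorial : ℚ)) ≠ 0 := fun k => by
  exact_mod_cast (Nat.factorial_pos k).ne'

lemma c_n_zero (r m : ℕ) : c r m 0 = 1 := by
  rcases m with _ | a
  · simp [c]
  · rw [c_succ]
    simp only [Nat.mul_zero, Nat.add_zero, Nat.factorial_succ, Nat.factorial_zero]
    push_cast
    rw [one_mul, div_self (by exact mul_ne_zero (by positivity) (fQ a))]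

lemma c_rec (r a b : ℕ) : c r (a+1) (b+1) = c r a (b+1) + c r (a+1+r) b := by
  rcases a with _ | a
  · rw [c_zero_succ, zero_add, c_succ]
    have h0 : 0 + 1 + r = r + 1 := by ring
    rw [h0, c_succ]
    have h1 : 0 + (r+1)*(b+1) = (r + (r+1)*b) + 1 := by ring
    have h3 : r + 1 + r * b = 0 + 1 + r * (b + 1) := by ring
    rw [h1, ← h3]
    simp only [Nat.factorial_succ]
    push_cast
    have hb : ((b:ℚ)+1) ≠ 0 := by positivity
    field_simp [fQ, hb]
    ring
  · rw [c_succ, c_succ]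
    have h0 : a + 1 + 1 + r = (a + 1 + r) + 1 := by ring
    rw [h0, c_succ]
    have h1 : a + 1 + (r+1)*(b+1) = (a + 1 + (r+1)*b + r) + 1 := by ring
    have h2 : a + (r+1)*(b+1) = a + 1 + (r+1)*b + r := by ring
    have h3 : a + 1 + r + (r+1)*b = a + 1 + (r+1)*b + r := by ring
    have h4 : a + 1 + 1 + r * (b+1) = (a + 1 + r * (b+1)) + 1 := by ring
    have h5 : a + 1 + r + 1 + r * b = (a + 1 + r * (b+1)) + 1 := by ring
    rw [h1, h2, h3, h4, h5]
    simp only [Nat.factorial_succ]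
    push_cast
    have hb : ((b:ℚ)+1) ≠ 0 := by positivity
    have hL : ((a:ℚ) + 1 + r*(b+1) + 1) ≠ 0 := by positivity
    field_simp [fQ, hb, hL]
    ring


lemma c_eq (r a n : ℕ) :
    c r (a+1) n = (((a:ℚ)+1)/((a:ℚ)+1+r*n)) * (Nat.choose (a+1+r*n+n-1) n : ℚ) := by
  have h1 : a+1+r*n+n-1 = a+r*n+n := by omega
  rw [c_succ, h1, Nat.cast_choose ℚ (by omega : n ≤ a+r*n+n)]
  have h2 : a + r*n + n - n = a + r*n := by omega
  have h3 : a + (r+1)*n = a + r*n + n := by ring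
  have h4 : a + 1 + r*n = (a + r*n) + 1 := by ring
  rw [h2, h3, h4]
  simp only [Nat.factorial_succ]
  push_cast
  have hL : ((a:ℚ) + r*n + 1) ≠ 0 := by positivity
  have hL2 : ((a:ℚ) + 1 + r*n) ≠ 0 := by positivity
  field_simp [fQ, hL, hL2]
  ring

lemma coeff_T_pow_of_lt (T : PowerSeries ℚ) (hT : constantCoeff T = 0) {j n : ℕ} (h : j < n) :
    coeff j (T^n) = 0 :=
  X_pow_dvd_iff.mp (pow_dvd_pow_of_dvd (X_dvd_iff.mpr hT) n) j h

lemma coeff_mul_left_congr (T A B : PowerSeries ℚ) (hT : constantCoeff T = 0) (j : ℕ)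
    (h : ∀ k < j, coeff k A = coeff k B) : coeff j (T*A) = coeff j (T*B) := by
  rw [coeff_mul, coeff_mul]
  apply Finset.sum_congr rfl
  intro p hp
  rcases Nat.eq_zero_or_pos p.1 with h0 | h0
  · rw [h0]
    simp [coeff_zero_eq_constantCoeff, hT]
  · have hp2 : p.2 < j := by
      have := Finset.HasAntidiagonal.mem_antidiagonal.mp hp; omega
    rw [h p.2 hp2]

lemma coeff_pow (r : ℕ) (T w : PowerSeries ℚ) (hT : constantCoeff T = 0)
    (hw : w = 1 + T * w^(r+1)) :
    ∀ j m, coeff j (w^m) = ∑ n ∈ Finset.range (j+1), c r m n * coeff j (T^n) := by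
  intro j
  induction j using Nat.strong_induction_on with
  | _ j ih =>
    intro m
    induction m with
    | zero =>
      rw [pow_zero, Finset.sum_range_succ']
      simp only [c_zero_succ, zero_mul, Finset.sum_const_zero, zero_add, c_n_zero, pow_zero,
        one_mul]
    | succ m ihm =>
      have hsplit : coeff j (w^(m+1)) = coeff j (w^m) + coeff j (T * w^(m+(r+1))) := by
        have hww : w^(m+1) = w^m + T * w^(m+(r+1)) := by
          calc w^(m+1) = w^m * w := pow_succ w m
          _ = w^m * (1 + T * w^(r+1)) := by rw [← hw]
          _ = w^m + T * (w^m * w^(r+1)) := by ring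
          _ = w^m + T * w^(m+(r+1)) := by rw [← pow_add]
        rw [hww, map_add]
      have hTB : coeff j (T * w^(m+(r+1))) =
          ∑ n ∈ Finset.range j, c r (m+(r+1)) n * coeff j (T^(n+1)) := by
        have step : coeff j (T * w^(m+(r+1))) =
            coeff j (T * ∑ n ∈ Finset.range j, C (c r (m+(r+1)) n) * T^n) := by
          apply coeff_mul_left_congr _ _ _ hT
          intro k hk
          rw [ih k hk (m+(r+1)), map_sum]
          simp only [coeff_C_mul]
          apply Finset.sum_subset
          · intro x hx
            simp only [Finset.mem_range] at hx ⊢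
            omega
          · intro x hx hnx
            simp only [Finset.mem_range] at hx hnx
            rw [coeff_T_pow_of_lt T hT (by omega), mul_zero]
        rw [step, Finset.mul_sum, map_sum]
        apply Finset.sum_congr rfl
        intro n _
        rw [show T * (C (c r (m+(r+1)) n) * T^n) = C (c r (m+(r+1)) n) * T^(n+1) by ring,
          coeff_C_mul]
      rw [hsplit, ihm, hTB, Finset.sum_range_succ', Finset.sum_range_succ'
        (fun n => c r (m+1) n * coeff j (T^n))]
      rw [add_right_comm, ← Finset.sum_add_distrib]
      congr 1
      · apply Finset.sum_congr rfl
        intro i _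
        rw [c_rec, show m+1+r = m+(r+1) from by omega]
        ring
      · rw [c_n_zero, c_n_zero]
end Stmt12

open Stmt12 in
theorem stmt_12 (b₀ bᵣ : ℚ) (r : ℕ) (hr : 1 ≤ r) (g : PowerSeries ℚ)
    (hg0 : constantCoeff g = 1)
    (hg : g = 1 + X * g * (C b₀ + C bᵣ * (X ^ 2 * g) ^ r))
    (m : ℕ) (hm : 1 ≤ m) :
    ∀ N : ℕ, coeff N (g ^ m) =
      ∑ n ∈ Finset.range (N + 1),
        ((m : ℚ) / (m + r * n)) * (Nat.choose (m + r * n + n - 1) n : ℚ) * bᵣ ^ n *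
          coeff N (X ^ (n * (2 * r + 1)) * ((1 - C b₀ * X)⁻¹) ^ (m + n * (r + 1))) := by
  intro N
  obtain ⟨u, hudef⟩ : ∃ u, u = (1 - C b₀ * X)⁻¹ := ⟨_, rfl⟩
  rw [← hudef]
  have hc0 : constantCoeff (1 - C b₀ * X) ≠ 0 := by simp
  have hu : (1 - C b₀ * X) * u = 1 := by
    rw [hudef]; exact PowerSeries.mul_inv_cancel _ hc0
  obtain ⟨w, hwdef⟩ : ∃ w, w = g * (1 - C b₀ * X) := ⟨_, rfl⟩
  have hgw : g = w * u := by
    rw [hwdef, mul_assoc, hu, mul_one]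
  have key : g - C b₀ * X * g = 1 + C bᵣ * (X^(2*r+1) * g^(r+1)) := by
    nth_rewrite 1 [hg]
    ring
  obtain ⟨T, hTdef⟩ : ∃ T, T = C bᵣ * (X^(2*r+1) * u^(r+1)) := ⟨_, rfl⟩
  have hT : constantCoeff T = 0 := by
    simp [hTdef, zero_pow, Nat.succ_ne_zero]
  have huw : u * w = g := by rw [hgw]; ring
  have hTw : T * w^(r+1) = C bᵣ * (X^(2*r+1) * g^(r+1)) := by
    rw [hTdef, ← huw, mul_pow]
    ring
  have hw : w = 1 + T * w^(r+1) := by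
    calc w = g - C b₀ * X * g := by rw [hwdef]; ring
    _ = 1 + C bᵣ * (X^(2*r+1) * g^(r+1)) := key
    _ = 1 + T * w^(r+1) := by rw [hTw]
  have hgm : g^m = w^m * u^m := by rw [hgw, mul_pow]
  have hcw := coeff_pow r T w hT hw
  obtain ⟨S, hSdef⟩ : ∃ S, S = ∑ n ∈ Finset.range (N+1), C (c r m n) * T^n := ⟨_, rfl⟩
  have step1 : coeff N (w^m * u^m) = coeff N (S * u^m) := by
    rw [coeff_mul, coeff_mul]
    apply Finset.sum_congr rfl
    intro p hp
    have hp1 : p.1 ≤ N := by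
      have := Finset.HasAntidiagonal.mem_antidiagonal.mp hp; omega
    congr 1
    rw [hcw p.1 m, hSdef, map_sum]
    simp only [coeff_C_mul]
    apply Finset.sum_subset
    · intro x hx
      simp only [Finset.mem_range] at hx ⊢
      omega
    · intro x hx hnx
      simp only [Finset.mem_range] at hx hnx
      rw [coeff_T_pow_of_lt T hT (by omega), mul_zero]
  have step2 : coeff N (S * u^m) =
      ∑ n ∈ Finset.range (N+1), c r m n * coeff N (T^n * u^m) := by
    rw [hSdef, Finset.sum_mul, map_sum]
    apply Finset.sum_congr rfl
    intro n _
    rw [show C (c r m n) * T^n * u^m = C (c r m n) * (T^n * u^m) by ring, coeff_C_mul]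
  rw [hgm, step1, step2]
  apply Finset.sum_congr rfl
  intro n _
  have hTn : T^n * u^m = C (bᵣ^n) * (X^(n*(2*r+1)) * u^(m+n*(r+1))) := by
    rw [hTdef, map_pow, show n*(2*r+1) = (2*r+1)*n from mul_comm _ _, pow_mul,
      show m+n*(r+1) = m+(r+1)*n by ring, pow_add, pow_mul]
    ring
  rw [hTn, coeff_C_mul]
  obtain ⟨a, rfl⟩ : ∃ a, m = a+1 := ⟨m-1, by omega⟩
  rw [c_eq]
  push_cast
  ring
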